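/- Let α₁ ∈ ℝ, α₂ > 0, ε > 0 and β ∈ ℝ, and suppose α₁ > 2 + ε and 0 < β < 8 + ε. Then the open first quadrant {z ∈ ℂ : Re z > 0 and Im z > 0} contains precisely 1 root of the polynomial Q (counted with multiplicity). -/

import Mathlib

open Complex Multiset Polynomial Real


noncomputable def argSum (s : Multiset ℂ) (x : ℝ) : ℝ :=
  (s.map (fun z => Complex.arg ((x : ℂ) - z))).sum

lemma prod_eq_abs_mul_exp (t : Multiset ℂ) :
    t.prod = (‖t.prod‖ : ℂ) *
      Complex.exp (((t.map Complex.arg).sum : ℝ) * Complex.I) := by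
  induction t using Multiset.induction_on with
  | empty => simp
  | cons a t ih =>
    rw [Multiset.prod_cons, Multiset.map_cons, Multiset.sum_cons]
    conv_lhs => rw [ih, ← Complex.norm_mul_exp_arg_mul_I a]
    push_cast
    rw [add_mul, Complex.exp_add, norm_mul, Complex.ofReal_mul]
    ring

lemma argSum_continuous (s : Multiset ℂ) (hs : ∀ z ∈ s, z.im ≠ 0) :
    Continuous (argSum s) := by
  induction s using Multiset.induction_on with
  | empty => exact (continuous_const (y := (0:ℝ))).congr (fun x => by simp [argSum])
  | cons a t ih =>
    have h1 : Continuous fun x : ℝ => Complex.arg ((x : ℂ) - a) := by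
      rw [continuous_iff_continuousAt]
      intro x
      apply (Complex.continuousAt_arg ?_).comp
      · exact (Complex.continuous_ofReal.sub continuous_const).continuousAt
      · right
        simpa using (hs a (Multiset.mem_cons_self a t))
    have h2 := ih (fun z hz => hs z (Multiset.mem_cons_of_mem hz))
    have : argSum (a ::ₘ t) = fun x : ℝ => Complex.arg ((x : ℂ) - a) + argSum t x := by
      funext x
      simp [argSum, Multiset.map_cons, Multiset.sum_cons]
    rw [this]
    exact h1.add h2

lemma abs_arcsin_le_pi_div_six {t : ℝ} (h : |t| ≤ 1 / 2) : |Real.arcsin t| ≤ π / 6 := by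
  have h6 : Real.arcsin (1 / 2) = π / 6 := by
    rw [show (1 / 2 : ℝ) = Real.sin (π / 6) from Real.sin_pi_div_six.symm,
      Real.arcsin_sin (by linarith [Real.pi_pos]) (by linarith [Real.pi_pos])]
  rw [abs_le] at h ⊢
  constructor
  · rw [show -(π / 6) = -Real.arcsin (1/2) from by rw [h6], ← Real.arcsin_neg]
    exact Real.monotone_arcsin (by linarith [h.1])
  · rw [← h6]; exact Real.monotone_arcsin h.2

lemma arg_bound_right (z : ℂ) (x : ℝ) (h : 2 * |z.im| ≤ x - z.re) (hpos : 0 < x - z.re) :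
    |Complex.arg ((x : ℂ) - z)| ≤ π / 6 := by
  set w : ℂ := (x : ℂ) - z with hw
  have hwre : w.re = x - z.re := by simp [hw]
  have hwim : w.im = -z.im := by simp [hw]
  have habs : 2 * |w.im| ≤ ‖w‖ := by
    calc 2 * |w.im| = 2 * |z.im| := by rw [hwim, abs_neg]
    _ ≤ x - z.re := h
    _ = w.re := hwre.symm
    _ ≤ |w.re| := le_abs_self _
    _ ≤ ‖w‖ := Complex.abs_re_le_norm w
  rw [Complex.arg_of_re_nonneg (by rw [hwre]; linarith)]
  apply abs_arcsin_le_pi_div_six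
  have habspos : 0 < ‖w‖ := by
    have := Complex.abs_re_le_norm w
    rw [hwre] at this
    have : x - z.re ≤ ‖w‖ := le_trans (le_abs_self _) this
    linarith
  rw [abs_div, abs_of_pos habspos, div_le_iff₀ habspos]
  linarith

lemma arg_bound_left (z : ℂ) (x : ℝ) (him : z.im ≠ 0) (h : 2 * |z.im| ≤ z.re - x)
    (hneg : 0 < z.re - x) :
    |Complex.arg ((x : ℂ) - z) - (if 0 < z.im then -π else π)| ≤ π / 6 := by
  set w : ℂ := (x : ℂ) - z with hw
  have hwre : w.re = x - z.re := by simp [hw]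
  have hwim : w.im = -z.im := by simp [hw]
  have hwreneg : w.re < 0 := by rw [hwre]; linarith
  have habs : 2 * |z.im| ≤ ‖w‖ := by
    calc 2 * |z.im| ≤ z.re - x := h
    _ = -w.re := by rw [hwre]; ring
    _ ≤ |w.re| := neg_le_abs _
    _ ≤ ‖w‖ := Complex.abs_re_le_norm w
  have habspos : 0 < ‖w‖ := by
    have h1 : 0 < z.re - x := hneg
    have := Complex.abs_re_le_norm w
    have h2 : -w.re ≤ ‖w‖ := le_trans (neg_le_abs _) this
    rw [hwre] at h2; linarith
  have hfrac : |(-w).im / ‖w‖| ≤ 1 / 2 := by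
    rw [abs_div, abs_of_pos habspos, div_le_iff₀ habspos]
    have : |(-w).im| = |z.im| := by rw [Complex.neg_im, hwim]; simp
    rw [this]; linarith
  rcases lt_or_gt_of_ne him with h1 | h1
  · -- z.im < 0, so w.im > 0
    rw [if_neg (by linarith), Complex.arg_of_re_neg_of_im_nonneg hwreneg (by rw [hwim]; linarith)]
    simpa using abs_arcsin_le_pi_div_six hfrac
  · -- z.im > 0, w.im < 0
    rw [if_pos h1, Complex.arg_of_re_neg_of_im_neg hwreneg (by rw [hwim]; linarith)]
    simpa [sub_eq_add_neg] using abs_arcsin_le_pi_div_six hfrac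

lemma abs_sum_sub_sum_le (s : Multiset ℂ) (f g : ℂ → ℝ) (c : ℝ) (hc : 0 ≤ c)
    (h : ∀ z ∈ s, |f z - g z| ≤ c) :
    |(s.map f).sum - (s.map g).sum| ≤ (Multiset.card s : ℝ) * c := by
  induction s using Multiset.induction_on with
  | empty => simpa using hc
  | cons a t ih =>
    simp only [Multiset.map_cons, Multiset.sum_cons, Multiset.card_cons]
    have h1 := h a (Multiset.mem_cons_self a t)
    have h2 := ih (fun z hz => h z (Multiset.mem_cons_of_mem hz))
    push_cast
    calc |f a + (Multiset.map f t).sum - (g a + (Multiset.map g t).sum)|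
        = |(f a - g a) + ((Multiset.map f t).sum - (Multiset.map g t).sum)| := by ring_nf
      _ ≤ |f a - g a| + |(Multiset.map f t).sum - (Multiset.map g t).sum| := abs_add_le _ _
      _ ≤ c + (Multiset.card t : ℝ) * c := add_le_add h1 h2
      _ = ((Multiset.card t : ℝ) + 1) * c := by ring

lemma halfplane_count (s : Multiset ℂ) (hcard : Multiset.card s = 4)
    (hval : ∀ x : ℝ, ((s.map (fun z => (x : ℂ) - z)).prod).im ≠ 0 ∨
      0 < ((s.map (fun z => (x : ℂ) - z)).prod).re) :
    Multiset.card (s.filter (fun z => 0 < z.im)) = 2 ∧ ∀ z ∈ s, z.im ≠ 0 := by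
  classical
  -- no real roots
  have him : ∀ z ∈ s, z.im ≠ 0 := by
    intro z hz h0
    have hzero : ((z.re : ℂ) - z) = 0 := by
      apply Complex.ext <;> simp [h0]
    have hprod : ((s.map (fun w => ((z.re : ℝ) : ℂ) - w)).prod) = 0 := by
      apply Multiset.prod_eq_zero
      rw [← hzero]
      exact Multiset.mem_map_of_mem _ hz
    rcases hval z.re with h | h <;> rw [hprod] at h <;> simp at h
  refine ⟨?_, him⟩
  -- key identity
  have key : ∀ x : ℝ, (s.map (fun z => (x : ℂ) - z)).prod =
      (‖(s.map (fun z => (x : ℂ) - z)).prod‖ : ℂ) *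
        Complex.exp ((argSum s x : ℝ) * Complex.I) := by
    intro x
    have := prod_eq_abs_mul_exp (s.map (fun z => (x : ℂ) - z))
    rw [Multiset.map_map] at this
    unfold argSum
    simpa [Function.comp] using this
  -- argSum never hits ±π
  have hnpi : ∀ x : ℝ, argSum s x ≠ π ∧ argSum s x ≠ -π := by
    intro x
    have hne : Complex.exp ((argSum s x : ℝ) * Complex.I) ≠ -1 := by
      intro hexp
      rcases hval x with h | h <;> rw [key x, hexp] at h
      · simp at h
      · simp only [mul_neg_one, Complex.neg_re, Complex.ofReal_re] at h
        have := norm_nonneg ((s.map (fun z => (x : ℂ) - z)).prod)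
        linarith
    constructor <;> intro hx <;> apply hne <;> rw [hx]
    · push_cast
      exact Complex.exp_pi_mul_I
    · push_cast
      rw [neg_mul, Complex.exp_neg, Complex.exp_pi_mul_I]
      norm_num
  have hcont : Continuous (argSum s) := argSum_continuous s him
  -- the big number M
  set M : ℝ := 1 + (s.map (fun z => |z.re| + 2 * |z.im|)).sum with hM
  have hMz : ∀ z ∈ s, |z.re| + 2 * |z.im| ≤ M - 1 := by
    intro z hz
    have : (s.map (fun z => |z.re| + 2 * |z.im|)).sum ≥ |z.re| + 2 * |z.im| := by
      apply Multiset.single_le_sum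
      · intro y hy
        rcases Multiset.mem_map.mp hy with ⟨w, _, rfl⟩
        positivity
      · exact Multiset.mem_map_of_mem _ hz
    simp only [hM]; linarith
  have hM1 : 1 ≤ M := by
    have : 0 ≤ (s.map (fun z => |z.re| + 2 * |z.im|)).sum := by
      apply Multiset.sum_nonneg
      intro y hy
      rcases Multiset.mem_map.mp hy with ⟨w, _, rfl⟩
      positivity
    simp only [hM]; linarith
  set n : ℕ := Multiset.card (s.filter (fun z => 0 < z.im)) with hn
  have hn4 : n ≤ 4 := by
    rw [hn, ← hcard]; exact Multiset.card_le_card (Multiset.filter_le _ s)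
  -- bound at M
  have bound1 : |argSum s M| ≤ 4 * (π / 6) := by
    have := abs_sum_sub_sum_le s (fun z => Complex.arg ((M : ℂ) - z)) (fun _ => 0) (π / 6)
      (by positivity) ?_
    · rw [Multiset.map_const'] at this
      simp only [Multiset.sum_replicate, smul_zero, sub_zero, hcard] at this
      simpa [argSum] using this
    · intro z hz
      rw [sub_zero]
      have := hMz z hz
      have h1 : |z.re| ≥ z.re := le_abs_self _
      apply arg_bound_right z M (by linarith [abs_nonneg z.im]) (by linarith [abs_nonneg z.im])
  -- bound at -M
  have bound2 : |argSum s (-M) - ((4 - 2 * (n : ℝ)) * π)| ≤ 4 * (π / 6) := by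
    have hsg : ((s.map (fun z => if 0 < z.im then -π else π)).sum) = (4 - 2 * (n : ℝ)) * π := by
      have hsplit := Multiset.filter_add_not (fun z : ℂ => 0 < z.im) s
      have : s.map (fun z => if 0 < z.im then -π else π) =
          ((s.filter (fun z : ℂ => 0 < z.im)).map (fun z => if 0 < z.im then -π else π)) +
          ((s.filter (fun z : ℂ => ¬ 0 < z.im)).map (fun z => if 0 < z.im then -π else π)) := by
        rw [← Multiset.map_add, hsplit]
      rw [this, Multiset.sum_add]
      have h1 : ((s.filter (fun z : ℂ => 0 < z.im)).map
          (fun z => if 0 < z.im then -π else π)) =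
          (s.filter (fun z : ℂ => 0 < z.im)).map (fun _ => -π) := by
        apply Multiset.map_congr rfl
        intro z hz
        exact if_pos (Multiset.mem_filter.mp hz).2
      have h2 : ((s.filter (fun z : ℂ => ¬ 0 < z.im)).map
          (fun z => if 0 < z.im then -π else π)) =
          (s.filter (fun z : ℂ => ¬ 0 < z.im)).map (fun _ => π) := by
        apply Multiset.map_congr rfl
        intro z hz
        exact if_neg (Multiset.mem_filter.mp hz).2
      have hcard2 : Multiset.card (s.filter (fun z : ℂ => ¬ 0 < z.im)) = 4 - n := by
        have := congrArg Multiset.card hsplit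
        rw [Multiset.card_add, hcard] at this
        omega
      rw [h1, h2, Multiset.map_const', Multiset.map_const', Multiset.sum_replicate,
        Multiset.sum_replicate, ← hn, hcard2]
      have hn4' : (n : ℝ) ≤ 4 := by exact_mod_cast hn4
      rw [nsmul_eq_mul, nsmul_eq_mul]
      push_cast [hn4]
      ring
    have := abs_sum_sub_sum_le s (fun z => Complex.arg (((-M : ℝ) : ℂ) - z))
      (fun z => if 0 < z.im then -π else π) (π / 6) (by positivity) ?_
    · rw [hsg, hcard] at this
      simpa [argSum] using this
    · intro z hz
      have := hMz z hz
      have h1 : -z.re ≤ |z.re| := neg_le_abs _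
      exact arg_bound_left z (-M) (him z hz) (by linarith [abs_nonneg z.im])
        (by linarith [abs_nonneg z.im])
  -- conclude by IVT
  have hpi6 : 4 * (π / 6) < π := by linarith [Real.pi_pos]
  by_contra hn2
  have hcases : n ≤ 1 ∨ 3 ≤ n := by omega
  have hMle : -M ≤ M := by linarith
  rcases hcases with hc | hc
  · -- argSum s (-M) ≥ 2π - 2π/3 > π, argSum s M < π
    have hlow : π < argSum s (-M) := by
      have hnr : (n : ℝ) ≤ 1 := by exact_mod_cast hc
      have h1 : (4 - 2 * (n : ℝ)) * π ≥ 2 * π := by nlinarith [Real.pi_pos]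
      have h2 := abs_le.mp bound2
      linarith [Real.pi_pos]
    have hhigh : argSum s M < π := by
      have := abs_le.mp bound1
      linarith
    have hmem : π ∈ Set.Icc (argSum s M) (argSum s (-M)) := ⟨le_of_lt hhigh, le_of_lt hlow⟩
    have := intermediate_value_Icc' hMle hcont.continuousOn hmem
    rcases this with ⟨x0, _, hx0⟩
    exact (hnpi x0).1 hx0
  · have hlow : argSum s (-M) < -π := by
      have hnr : (3 : ℝ) ≤ (n : ℝ) := by exact_mod_cast hc
      have h1 : (4 - 2 * (n : ℝ)) * π ≤ -2 * π := by nlinarith [Real.pi_pos]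
      have h2 := abs_le.mp bound2
      linarith [Real.pi_pos]
    have hhigh : -π < argSum s M := by
      have := abs_le.mp bound1
      linarith
    have hmem : -π ∈ Set.Icc (argSum s (-M)) (argSum s M) := ⟨le_of_lt hlow, le_of_lt hhigh⟩
    have := intermediate_value_Icc hMle hcont.continuousOn hmem
    rcases this with ⟨x0, _, hx0⟩
    exact (hnpi x0).2 hx0

open Polynomial in
/-- The quartic `Q(z) = z⁴ + (4z/(β+ε))·[(2+ε)(z²+1) + (α₁ − iα₂)(z²−1)]
+ 2((16−β+3ε)/(β+ε))z² + 1` as a polynomial over ℂ. -/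
noncomputable def QP (a1 a2 e b : ℝ) : Polynomial ℂ :=
  X ^ 4
    + C ((4 : ℂ) / ((b : ℂ) + (e : ℂ)))
        * (X * (C ((2 : ℂ) + (e : ℂ)) * (X ^ 2 + 1)
            + C ((a1 : ℂ) - Complex.I * (a2 : ℂ)) * (X ^ 2 - 1)))
    + C (2 * (((16 : ℂ) - (b : ℂ) + 3 * (e : ℂ)) / ((b : ℂ) + (e : ℂ)))) * X ^ 2 + 1


noncomputable def KK (a1 a2 e b : ℝ) (w : ℂ) : ℂ :=
  ((b:ℂ)+(e:ℂ)) * w^4 + 4*(w * (((2:ℂ)+(e:ℂ))*(w^2+1)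
      + ((a1:ℂ) - I*(a2:ℂ))*(w^2-1))) + 2*((16:ℂ)-(b:ℂ)+3*(e:ℂ))*w^2 + ((b:ℂ)+(e:ℂ))

variable (a1 a2 e b : ℝ)

lemma QP_monic : (QP a1 a2 e b).Monic := by
  unfold QP
  monicity!

lemma QP_natDegree : (QP a1 a2 e b).natDegree = 4 := by
  unfold QP
  compute_degree!

lemma QP_card_roots : Multiset.card (QP a1 a2 e b).roots = 4 := by
  rw [(Polynomial.splits_iff_card_roots).mp (IsAlgClosed.splits _), QP_natDegree]

lemma QP_eval_prod (x : ℂ) :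
    ((QP a1 a2 e b).roots.map (fun z => x - z)).prod = (QP a1 a2 e b).eval x := by
  conv_rhs => rw [Polynomial.Splits.eq_prod_roots_of_monic (IsAlgClosed.splits _)
    (QP_monic a1 a2 e b)]
  rw [Polynomial.eval_multiset_prod, Multiset.map_map]
  simp [Function.comp]

lemma QP_K (hbe : 0 < b + e) (w : ℂ) :
    (((b + e : ℝ)) : ℂ) * (QP a1 a2 e b).eval w = KK a1 a2 e b w := by
  have h0 : ((b:ℂ) + (e:ℂ)) ≠ 0 := by
    have : ((b:ℂ) + (e:ℂ)) = ((b + e : ℝ) : ℂ) := by push_cast; ring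
    rw [this]
    exact_mod_cast ne_of_gt hbe
  simp only [QP, KK, eval_add, eval_sub, eval_mul, eval_pow, eval_X, eval_C, eval_one]
  field_simp
  push_cast
  ring

lemma scaled {k : ℝ} (hk : 0 < k) {E : ℂ}
    (h : ((k:ℂ) * E).im ≠ 0 ∨ 0 < ((k:ℂ) * E).re) : E.im ≠ 0 ∨ 0 < E.re := by
  rcases h with h | h
  · left
    intro h0
    apply h
    simp [Complex.mul_im, h0]
  · right
    have hre : ((k:ℂ) * E).re = k * E.re := by simp [Complex.mul_re]
    rw [hre] at h
    nlinarith

variable {a1 a2 e b : ℝ}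

lemma val1 (ha2 : 0 < a2) (he : 0 < e) (ha1 : 2 + e < a1) (hb₁ : 0 < b) (hb₂ : b < 8 + e)
    (x : ℝ) : (KK a1 a2 e b (x:ℂ)).im ≠ 0 ∨ 0 < (KK a1 a2 e b (x:ℂ)).re := by
  have him : (KK a1 a2 e b (x:ℂ)).im = -4*a2*(x*(x^2-1)) := by
    simp [KK, pow_succ]; try ring
  have hre : (KK a1 a2 e b (x:ℂ)).re =
      (b+e)*x^4 + 4*(x*((2+e)*(x^2+1) + a1*(x^2-1))) + 2*(16-b+3*e)*x^2 + (b+e) := by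
    simp [KK, pow_succ]; try ring
  by_cases hx : x*(x^2-1) = 0
  · right
    rw [hre]
    rcases mul_eq_zero.mp hx with h0 | h1
    · subst h0; nlinarith
    · have : (x-1)*(x+1) = 0 := by nlinarith
      rcases mul_eq_zero.mp this with h | h
      · have hx1 : x = 1 := by linarith
        subst hx1; nlinarith
      · have hx1 : x = -1 := by linarith
        subst hx1; nlinarith
  · left
    rw [him]
    intro h0
    apply hx
    have h4 : a2 * (x*(x^2-1)) = 0 := by linarith
    exact (mul_eq_zero.mp h4).resolve_left (ne_of_gt ha2)

lemma val2 (ha2 : 0 < a2) (he : 0 < e) (ha1 : 2 + e < a1) (hb₁ : 0 < b) (hb₂ : b < 8 + e)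
    (x : ℝ) : (KK a1 a2 e b (-I*(x:ℂ))).im ≠ 0 ∨ 0 < (KK a1 a2 e b (-I*(x:ℂ))).re := by
  have him : (KK a1 a2 e b (-I*(x:ℂ))).im = 4*x*(a1*(1+x^2) - (2+e)*(1-x^2)) := by
    simp [KK, pow_succ]; try ring
  have hre : (KK a1 a2 e b (-I*(x:ℂ))).re =
      (b+e)*x^4 + 4*a2*x*(1+x^2) - 2*(16-b+3*e)*x^2 + (b+e) := by
    simp [KK, pow_succ]; try ring
  by_cases hx : x = 0
  · right
    rw [hre, hx]
    norm_num
    nlinarith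
  · left
    rw [him]
    have hbr : 0 < a1*(1+x^2) - (2+e)*(1-x^2) := by nlinarith [sq_nonneg x]
    intro h0
    rcases mul_eq_zero.mp h0 with h | h
    · have : x = 0 := by linarith
      exact hx this
    · linarith

set_option maxHeartbeats 1000000 in
lemma val3 (ha2 : 0 < a2) (he : 0 < e) (ha1 : 2 + e < a1) (hb₁ : 0 < b) (hb₂ : b < 8 + e)
    (y : ℝ) : (KK a1 a2 e b (y:ℂ) * KK a1 a2 e b (-(y:ℂ))).im ≠ 0 ∨
      0 < (KK a1 a2 e b (y:ℂ) * KK a1 a2 e b (-(y:ℂ))).re := by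
  set L : ℝ := (2+e)*(y^2+1) + a1*(y^2-1) with hL
  have him : (KK a1 a2 e b (y:ℂ) * KK a1 a2 e b (-(y:ℂ))).im =
      32*a2*(y^2*((y^2-1)*L)) := by
    simp [KK, pow_succ, hL]; try ring
  have hre : (KK a1 a2 e b (y:ℂ) * KK a1 a2 e b (-(y:ℂ))).re =
      ((b+e)*y^4 + 2*(16-b+3*e)*y^2 + (b+e))^2 - 16*y^2*L^2 + 16*a2^2*y^2*(y^2-1)^2 := by
    simp [KK, pow_succ, hL]; try ring
  by_cases hz : y^2*((y^2-1)*L) = 0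
  · right
    rw [hre]
    rcases mul_eq_zero.mp hz with h0 | h1
    · have hy : y = 0 := by nlinarith [sq_nonneg y]
      subst hy; norm_num; nlinarith
    · rcases mul_eq_zero.mp h1 with h2 | h3
      · -- y^2 = 1
        have hy2 : y^2 = 1 := by linarith
        have hy4 : y^4 = 1 := by nlinarith
        have hL1 : L = 2*(2+e) := by rw [hL]; rw [hy2]; ring
        rw [hy2, hy4, hL1]
        nlinarith
      · -- L = 0
        rw [h3]
        have h4 : y ≠ 0 := by
          intro h5
          rw [hL, h5] at h3
          nlinarith
        have h5 : y^2 - 1 ≠ 0 := by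
          intro h6
          rw [hL] at h3
          nlinarith
        have hy2 : 0 < y^2 := pow_two_pos_of_ne_zero h4
        have hv2 : 0 < (y^2-1)^2 := pow_two_pos_of_ne_zero h5
        have ha22 : 0 < a2^2 := pow_two_pos_of_ne_zero (ne_of_gt ha2)
        linarith [sq_nonneg ((b+e)*y^4 + 2*(16-b+3*e)*y^2 + (b+e)),
          mul_pos (mul_pos ha22 hy2) hv2]
  · left
    rw [him]
    intro h0
    apply hz
    have h4 : a2 * (y^2*((y^2-1)*L)) = 0 := by linarith
    exact (mul_eq_zero.mp h4).resolve_left (ne_of_gt ha2)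

lemma val4 (ha2 : 0 < a2) (he : 0 < e) (ha1 : 2 + e < a1) (hb₁ : 0 < b) (hb₂ : b < 8 + e)
    (y : ℝ) : (KK a1 a2 e b (I*(y:ℂ)) * KK a1 a2 e b (-I*(y:ℂ))).im ≠ 0 ∨
      0 < (KK a1 a2 e b (I*(y:ℂ)) * KK a1 a2 e b (-I*(y:ℂ))).re := by
  have him : (KK a1 a2 e b (I*(y:ℂ)) * KK a1 a2 e b (-I*(y:ℂ))).im =
      32*a2*(y^2*((1+y^2)*((2+e)*(1-y^2) - a1*(1+y^2)))) := by
    simp [KK, pow_succ]; try ring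
  by_cases hy : y = 0
  · right
    subst hy
    norm_num [KK]
    nlinarith
  · left
    rw [him]
    have hbr : (2+e)*(1-y^2) - a1*(1+y^2) < 0 := by nlinarith [sq_nonneg y]
    intro h0
    have h4 : a2 * (y^2*((1+y^2)*((2+e)*(1-y^2) - a1*(1+y^2)))) = 0 := by linarith
    have h5 := (mul_eq_zero.mp h4).resolve_left (ne_of_gt ha2)
    rcases mul_eq_zero.mp h5 with h | h
    · exact hy (by nlinarith [sq_nonneg y])
    · rcases mul_eq_zero.mp h with h | h
      · nlinarith [sq_nonneg y]
      · linarith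

/-- If `α₁ > 2 + ε` and `0 < β < 8 + ε`, then the open first quadrant contains
precisely 1 root of `Q`, counted with multiplicity. -/
theorem stmt_16 (a1 a2 e b : ℝ) (ha2 : 0 < a2) (he : 0 < e)
    (ha1 : 2 + e < a1) (hb₁ : 0 < b) (hb₂ : b < 8 + e) :
    Multiset.card ((QP a1 a2 e b).roots.filter (fun z => 0 < z.re ∧ 0 < z.im)) = 1 := by
  classical
  have hbe : 0 < b + e := by linarith
  set S : Multiset ℂ := (QP a1 a2 e b).roots with hS
  have hS4 : Multiset.card S = 4 := QP_card_roots a1 a2 e b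
  have heval : ∀ x : ℂ, (S.map (fun z => x - z)).prod = (QP a1 a2 e b).eval x :=
    QP_eval_prod a1 a2 e b
  -- Application A : Q itself
  have appA := halfplane_count S hS4 (by
    intro x
    rw [heval]
    exact scaled hbe (by rw [QP_K a1 a2 e b hbe]; exact val1 ha2 he ha1 hb₁ hb₂ x))
  -- Application B : rotated
  have hI4 : (I : ℂ)^4 = 1 := by
    rw [show (4:ℕ) = 2*2 from rfl, pow_mul, Complex.I_sq]; norm_num
  have appB := halfplane_count (S.map (fun z => I * z))
    (by rw [Multiset.card_map, hS4]) (by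
    intro x
    rw [Multiset.map_map]
    have hpt : ∀ z : ℂ, ((fun z => (x:ℂ) - z) ∘ (fun z => I * z)) z
        = I * ((-I*(x:ℂ)) - z) := by
      intro z
      simp only [Function.comp]
      linear_combination (x:ℂ) * Complex.I_sq
    rw [Multiset.map_congr rfl (fun z _ => hpt z)]
    have : (S.map (fun z => I * ((-I*(x:ℂ)) - z))).prod
        = (S.map (fun _ => I)).prod * (S.map (fun z => (-I*(x:ℂ)) - z)).prod := by
      rw [← Multiset.prod_map_mul]
    rw [this, Multiset.map_const', Multiset.prod_replicate, hS4, hI4, one_mul, heval]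
    exact scaled hbe (by rw [QP_K a1 a2 e b hbe]; exact val2 ha2 he ha1 hb₁ hb₂ x))
  -- Application C : squared roots
  have appC := halfplane_count (S.map (fun z => z^2))
    (by rw [Multiset.card_map, hS4]) (by
    intro x
    rw [Multiset.map_map]
    have hsc : ∀ w1 w2 : ℂ, (((b + e : ℝ)^2 : ℝ) : ℂ) *
        ((QP a1 a2 e b).eval w1 * (QP a1 a2 e b).eval w2)
        = KK a1 a2 e b w1 * KK a1 a2 e b w2 := by
      intro w1 w2
      rw [← QP_K a1 a2 e b hbe w1, ← QP_K a1 a2 e b hbe w2]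
      push_cast
      ring
    rcases le_or_gt 0 x with hx | hx
    · set y : ℝ := Real.sqrt x with hy
      have hy2 : y^2 = x := Real.sq_sqrt hx
      have hpt : ∀ z : ℂ, ((fun w => (x:ℂ) - w) ∘ (fun z => z^2)) z
          = ((y:ℂ) - z) * (-1 * (-(y:ℂ) - z)) := by
        intro z
        simp only [Function.comp]
        rw [show x = y^2 from hy2.symm]
        push_cast
        ring
      have hprod : (Multiset.map ((fun w => (x:ℂ) - w) ∘ (fun z => z^2)) S).prod
          = (QP a1 a2 e b).eval (y:ℂ) * (QP a1 a2 e b).eval (-(y:ℂ)) := by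
        rw [Multiset.map_congr rfl (fun z _ => hpt z), Multiset.prod_map_mul,
          Multiset.prod_map_mul, Multiset.map_const', Multiset.prod_replicate, hS4,
          heval, heval]
        norm_num
      rw [hprod]
      exact scaled (k := (b+e)^2) (by positivity) (by
        rw [hsc]
        exact val3 ha2 he ha1 hb₁ hb₂ y)
    · set y : ℝ := Real.sqrt (-x) with hy
      have hy2 : y^2 = -x := Real.sq_sqrt (by linarith)
      have hpt : ∀ z : ℂ, ((fun w => (x:ℂ) - w) ∘ (fun z => z^2)) z
          = (I*(y:ℂ) - z) * (-1 * ((-I*(y:ℂ)) - z)) := by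
        intro z
        simp only [Function.comp]
        rw [show x = -y^2 by linarith]
        push_cast
        linear_combination (-(y:ℂ)^2) * Complex.I_sq
      have hprod : (Multiset.map ((fun w => (x:ℂ) - w) ∘ (fun z => z^2)) S).prod
          = (QP a1 a2 e b).eval (I*(y:ℂ)) * (QP a1 a2 e b).eval (-I*(y:ℂ)) := by
        rw [Multiset.map_congr rfl (fun z _ => hpt z), Multiset.prod_map_mul,
          Multiset.prod_map_mul, Multiset.map_const', Multiset.prod_replicate, hS4,
          heval, heval]
        norm_num
      rw [hprod]
      exact scaled (k := (b+e)^2) (by positivity) (by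
        rw [hsc]
        exact val4 ha2 he ha1 hb₁ hb₂ y))
  -- extract counts
  obtain ⟨him2, himne⟩ := appA
  obtain ⟨hreB, hrene'⟩ := appB
  obtain ⟨hsq2, _⟩ := appC
  have hrene : ∀ z ∈ S, z.re ≠ 0 := by
    intro z hz
    have := hrene' (I * z) (Multiset.mem_map_of_mem _ hz)
    simpa using this
  -- translate filter counts
  have hre2 : Multiset.card (S.filter (fun z => 0 < z.re)) = 2 := by
    rw [← hreB, Multiset.filter_map, Multiset.card_map]
    congr 1
    apply Multiset.filter_congr
    intro z _
    simp [Function.comp, Complex.mul_im]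
  have hsq2' : Multiset.card (S.filter (fun z => 0 < z.re * z.im)) = 2 := by
    rw [← hsq2, Multiset.filter_map, Multiset.card_map]
    congr 1
    apply Multiset.filter_congr
    intro z _
    simp [Function.comp, pow_two, Complex.mul_im]
    constructor <;> intro h <;> nlinarith
  -- final combinatorial count
  have key : ∀ (p q : ℂ → Prop) [DecidablePred p] [DecidablePred q],
      Multiset.card (S.filter q) =
        Multiset.card (S.filter (fun z => p z ∧ q z)) +
        Multiset.card (S.filter (fun z => ¬ p z ∧ q z)) := by
    intro p q _ _
    rw [← Multiset.card_add, ← Multiset.filter_add_not p (S.filter q),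
      Multiset.filter_filter, Multiset.filter_filter]
  have e1 := key (fun z => 0 < z.re) (fun z => 0 < z.im)
  have e2 := key (fun z => 0 < z.im) (fun z => 0 < z.re)
  have e3 := key (fun z => 0 < z.im) (fun z => 0 < z.re * z.im)
  rw [him2] at e1
  rw [hre2] at e2
  rw [hsq2'] at e3
  -- identify predicates
  have ee1 : S.filter (fun z => (0 < z.re) ∧ 0 < z.im)
      = S.filter (fun z => 0 < z.re ∧ 0 < z.im) := rfl
  have p1 : Multiset.card (S.filter (fun z => 0 < z.im ∧ 0 < z.re))
      = Multiset.card (S.filter (fun z => 0 < z.re ∧ 0 < z.im)) := by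
    congr 1
    apply Multiset.filter_congr
    intro z _
    tauto
  have p2 : Multiset.card (S.filter (fun z => 0 < z.im ∧ 0 < z.re * z.im))
      = Multiset.card (S.filter (fun z => 0 < z.re ∧ 0 < z.im)) := by
    congr 1
    apply Multiset.filter_congr
    intro z hz
    have h1 := hrene z hz
    have h2 := himne z hz
    constructor
    · rintro ⟨hq, hr⟩
      exact ⟨by nlinarith, hq⟩
    · rintro ⟨hp, hq⟩
      exact ⟨hq, by nlinarith⟩
  have p3 : Multiset.card (S.filter (fun z => ¬ 0 < z.im ∧ 0 < z.re * z.im))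
      = Multiset.card (S.filter (fun z => ¬ 0 < z.im ∧ ¬ 0 < z.re)) := by
    congr 1
    apply Multiset.filter_congr
    intro z hz
    have h1 := hrene z hz
    have h2 := himne z hz
    have him' : z.im < 0 ∨ 0 < z.im := h2.lt_or_gt
    constructor
    · rintro ⟨hq, hr⟩
      refine ⟨hq, ?_⟩
      intro hre
      rcases him' with h | h
      · nlinarith
      · exact hq h
    · rintro ⟨hq, hp⟩
      refine ⟨hq, ?_⟩
      rcases him' with h | h
      · rcases h1.lt_or_gt with h' | h'
        · nlinarith
        · exact absurd h' (by simpa using hp)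
      · exact absurd h hq
  -- card of ¬q filter
  have e4 : Multiset.card (S.filter (fun z => 0 < z.im)) +
      Multiset.card (S.filter (fun z => ¬ 0 < z.im)) = 4 := by
    rw [← Multiset.card_add, Multiset.filter_add_not, hS4]
  have e5 := key (fun z => 0 < z.re) (fun z => ¬ 0 < z.im)
  -- assemble with omega
  rw [p1] at e2
  rw [p2, p3] at e3
  rw [him2] at e4
  -- e1 : 2 = card(p∧q) + card(¬p∧q)  with p = 0<re, q = 0<im
  -- e2 : 2 = card(0<re∧0<im) + card(¬(0<im)∧0<re)
  -- e3 : 2 = card(0<re∧0<im) + card(¬0<im∧¬0<re)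
  -- e4 : card(¬0<im) = 2
  -- e5 : card(¬0<im) = card(0<re∧¬0<im) + card(¬0<re∧¬0<im)
  have c1 : Multiset.card (S.filter (fun z => ¬ 0 < z.im ∧ 0 < z.re))
      = Multiset.card (S.filter (fun z => (0 < z.re) ∧ ¬ 0 < z.im)) := by
    congr 1
    apply Multiset.filter_congr
    intro z _
    tauto
  have c2 : Multiset.card (S.filter (fun z => ¬ 0 < z.im ∧ ¬ 0 < z.re))
      = Multiset.card (S.filter (fun z => ¬ (0 < z.re) ∧ ¬ 0 < z.im)) := by
    congr 1
    apply Multiset.filter_congr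
    intro z _
    tauto
  rw [c1] at e2
  rw [c2] at e3
  omega
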